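/- arXiv:1509.02550 — 4 statements merged into one kernel-verified Lean document; each statement's English description precedes it below -/
import Mathlib

section
/- If a real symmetric block matrix Λ = [[Λ₁₁, Λ₁₂],[Λ₁₂ᵀ, Λ₂₂]] is positive semidefinite, then the trace norm of the off-diagonal block satisfies ‖Λ₁₂‖_tr² ≤ ‖Λ₁₁‖_tr · ‖Λ₂₂‖_tr. -/
open Matrix BigOperators

/-- Trace norm of a real matrix: `Tr √(MᵀM)`, the sum of singular values. -/
noncomputable def traceNorm {m n : Type*} [Fintype m] [Fintype n] [DecidableEq n]
    (M : Matrix m n ℝ) : ℝ :=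
  (((Matrix.posSemidef_conjTranspose_mul_self M).1.eigenvectorUnitary : Matrix n n ℝ) *
    Matrix.diagonal (Real.sqrt ∘ (Matrix.posSemidef_conjTranspose_mul_self M).1.eigenvalues) *
    (star (Matrix.posSemidef_conjTranspose_mul_self M).1.eigenvectorUnitary : Matrix n n ℝ)).trace

/-- square root of a real PSD matrix via the spectral decomposition -/
noncomputable def Matrix.PosSemidef.sqrt {k : Type*} [Fintype k] [DecidableEq k]
    {A : Matrix k k ℝ} (hA : A.PosSemidef) : Matrix k k ℝ :=
  (hA.1.eigenvectorUnitary : Matrix k k ℝ) * Matrix.diagonal (Real.sqrt ∘ hA.1.eigenvalues) *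
    (star hA.1.eigenvectorUnitary : Matrix k k ℝ)

section psdSqrtPort

open scoped MatrixOrder

lemma Matrix.PosSemidef.sqrt_eq_cfc {k : Type*} [Fintype k] [DecidableEq k]
    {A : Matrix k k ℝ} (hA : A.PosSemidef) : hA.sqrt = CFC.sqrt A := by
  rw [CFC.sqrt_eq_real_sqrt A hA.nonneg, cfcₙ_eq_cfc (hf0 := by simp), hA.1.cfc_eq]
  rfl

lemma Matrix.PosSemidef.posSemidef_sqrt {k : Type*} [Fintype k] [DecidableEq k]
    {A : Matrix k k ℝ} (hA : A.PosSemidef) : hA.sqrt.PosSemidef := by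
  rw [hA.sqrt_eq_cfc]; exact (CFC.sqrt_nonneg A).posSemidef

lemma Matrix.PosSemidef.sqrt_mul_self {k : Type*} [Fintype k] [DecidableEq k]
    {A : Matrix k k ℝ} (hA : A.PosSemidef) : hA.sqrt * hA.sqrt = A := by
  rw [hA.sqrt_eq_cfc]; exact CFC.sqrt_mul_sqrt_self A hA.nonneg

lemma Matrix.PosSemidef.eq_sqrt_of_sq_eq {k : Type*} [Fintype k] [DecidableEq k]
    {A : Matrix k k ℝ} (hA : A.PosSemidef) (B : Matrix k k ℝ) {hB : B.PosSemidef}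
    (h : A ^ 2 = B) : A = hB.sqrt := by
  rw [hB.sqrt_eq_cfc, ← h, CFC.sqrt_sq A hA.nonneg]

end psdSqrtPort

lemma herm_transpose {k : Type*} [Fintype k] {M : Matrix k k ℝ}
    (h : M.IsHermitian) : Mᵀ = M := by
  rw [← conjTranspose_eq_transpose_of_trivial]; exact h

lemma trace_transpose_mul_eq {α β : Type*} [Fintype α] [Fintype β]
    (X Y : Matrix α β ℝ) : (Xᵀ * Y).trace = ∑ p : α × β, X p.1 p.2 * Y p.1 p.2 := by
  simp only [Matrix.trace, Matrix.diag, Matrix.mul_apply, Matrix.transpose_apply,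
    Fintype.sum_prod_type]
  exact Finset.sum_comm ..

lemma frob_cs {α β : Type*} [Fintype α] [Fintype β] (X Y : Matrix α β ℝ) :
    (Xᵀ * Y).trace ^ 2 ≤ (Xᵀ * X).trace * (Yᵀ * Y).trace := by
  rw [trace_transpose_mul_eq, trace_transpose_mul_eq, trace_transpose_mul_eq]
  simpa [sq] using Finset.sum_mul_sq_le_sq_mul_sq Finset.univ
    (fun p : α × β => X p.1 p.2) (fun p => Y p.1 p.2)

lemma frob_nonneg {α β : Type*} [Fintype α] [Fintype β] (X : Matrix α β ℝ) :
    0 ≤ (Xᵀ * X).trace := by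
  rw [trace_transpose_mul_eq]
  exact Finset.sum_nonneg fun p _ => mul_self_nonneg _

/-- trace norm of a PSD symmetric real matrix is its trace -/
lemma traceNorm_of_posSemidef {k : Type*} [Fintype k] [DecidableEq k]
    {M : Matrix k k ℝ} (hM : M.PosSemidef) : traceNorm M = M.trace := by
  have h : M = (Matrix.posSemidef_conjTranspose_mul_self M).sqrt := by
    refine hM.eq_sqrt_of_sq_eq _ ?_
    rw [pow_two, conjTranspose_eq_transpose_of_trivial, herm_transpose hM.1]
  rw [show traceNorm M = (Matrix.posSemidef_conjTranspose_mul_self M).sqrt.trace from rfl, ← h]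

theorem block_psd_trace_norm_ineq {m n : Type*} [Fintype m] [Fintype n]
    [DecidableEq m] [DecidableEq n]
    (Λ11 : Matrix m m ℝ) (Λ12 : Matrix m n ℝ) (Λ22 : Matrix n n ℝ)
    (h11 : Λ11.IsSymm) (h22 : Λ22.IsSymm)
    (hΛ : (Matrix.fromBlocks Λ11 Λ12 Λ12ᵀ Λ22).PosSemidef) :
    traceNorm Λ12 ^ 2 ≤ traceNorm Λ11 * traceNorm Λ22 := by
  classical
  set Λ : Matrix (m ⊕ n) (m ⊕ n) ℝ := Matrix.fromBlocks Λ11 Λ12 Λ12ᵀ Λ22 with hΛdef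
  set R : Matrix (m ⊕ n) (m ⊕ n) ℝ := hΛ.sqrt with hRdef
  have hRR : R * R = Λ := hΛ.sqrt_mul_self
  have hRt : Rᵀ = R := herm_transpose hΛ.posSemidef_sqrt.1
  have hRs : ∀ a b, R a b = R b a := fun a b => congrFun (congrFun hRt b) a
  set A : Matrix (m ⊕ n) m ℝ := R.submatrix id Sum.inl with hAdef
  set B : Matrix (m ⊕ n) n ℝ := R.submatrix id Sum.inr with hBdef
  have key : ∀ p q : m ⊕ n, (∑ k, R k p * R k q) = Λ p q := by
    intro p q
    have h1 : (R * R) p q = Λ p q := by rw [hRR]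
    rw [Matrix.mul_apply] at h1
    rw [← h1]
    exact Finset.sum_congr rfl fun k _ => by rw [hRs k p]
  have hA11 : Aᵀ * A = Λ11 := by
    ext i j
    simp only [Matrix.mul_apply, Matrix.transpose_apply, hAdef, Matrix.submatrix_apply, id]
    rw [key (Sum.inl i) (Sum.inl j)]
    simp [hΛdef]
  have hA12 : Aᵀ * B = Λ12 := by
    ext i j
    simp only [Matrix.mul_apply, Matrix.transpose_apply, hAdef, hBdef,
      Matrix.submatrix_apply, id]
    rw [key (Sum.inl i) (Sum.inr j)]
    simp [hΛdef]
  have hB22 : Bᵀ * B = Λ22 := by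
    ext i j
    simp only [Matrix.mul_apply, Matrix.transpose_apply, hBdef, Matrix.submatrix_apply, id]
    rw [key (Sum.inr i) (Sum.inr j)]
    simp [hΛdef]
  -- positive semidefiniteness of the diagonal blocks
  have hP11 : Λ11.PosSemidef := by
    have := Matrix.posSemidef_conjTranspose_mul_self A
    rwa [conjTranspose_eq_transpose_of_trivial, hA11] at this
  have hP22 : Λ22.PosSemidef := by
    have := Matrix.posSemidef_conjTranspose_mul_self B
    rwa [conjTranspose_eq_transpose_of_trivial, hB22] at this
  -- S = sqrt(Λ12ᵀ Λ12) and its spectral decomposition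
  set S : Matrix n n ℝ := (Matrix.posSemidef_conjTranspose_mul_self Λ12).sqrt with hSdef
  have htn12 : traceNorm Λ12 = S.trace := rfl
  have hSS : S * S = Λ12ᵀ * Λ12 := by
    refine ((Matrix.posSemidef_conjTranspose_mul_self Λ12).sqrt_mul_self).trans ?_
    rw [conjTranspose_eq_transpose_of_trivial]
  have hSH : S.IsHermitian := (Matrix.posSemidef_conjTranspose_mul_self Λ12).posSemidef_sqrt.1
  set σ : n → ℝ := hSH.eigenvalues with hσdef
  set V : Matrix n n ℝ := (hSH.eigenvectorUnitary : Matrix n n ℝ) with hVdef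
  have hV1 : Vᵀ * V = 1 := by
    have := Matrix.mem_unitaryGroup_iff'.mp hSH.eigenvectorUnitary.2
    rwa [star_eq_conjTranspose, conjTranspose_eq_transpose_of_trivial] at this
  have hV2 : V * Vᵀ = 1 := by
    have := Matrix.mem_unitaryGroup_iff.mp hSH.eigenvectorUnitary.2
    rwa [star_eq_conjTranspose, conjTranspose_eq_transpose_of_trivial] at this
  set D : Matrix n n ℝ := Matrix.diagonal σ with hDdef
  have hSpec : S = V * D * Vᵀ := by
    have := hSH.spectral_theorem
    rw [Unitary.conjStarAlgAut_apply] at this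
    rwa [star_eq_conjTranspose, conjTranspose_eq_transpose_of_trivial,
      show (RCLike.ofReal ∘ σ : n → ℝ) = σ from funext fun i => rfl] at this
  have hcan : ∀ X : Matrix n n ℝ, Vᵀ * (V * X) = X := fun X => by
    rw [← Matrix.mul_assoc, hV1, one_mul]
  set C : Matrix m n ℝ := Λ12 * V with hCdef
  have hCC : Cᵀ * C = D * D := by
    have h0 : Cᵀ * C = Vᵀ * (Λ12ᵀ * Λ12) * V := by
      rw [hCdef, Matrix.transpose_mul]; simp only [Matrix.mul_assoc]
    rw [h0, ← hSS, hSpec]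
    simp only [Matrix.mul_assoc]
    rw [hcan, hcan, hV1, mul_one]
  set Dp : Matrix n n ℝ := Matrix.diagonal (fun i => if σ i = 0 then 0 else (σ i)⁻¹)
    with hDpdef
  set E : Matrix n n ℝ := Matrix.diagonal (fun i => if σ i = 0 then (0:ℝ) else 1) with hEdef
  have hDpt : Dpᵀ = Dp := Matrix.diagonal_transpose _
  have hDpDD : Dp * (D * D) = D := by
    rw [hDpdef, hDdef, Matrix.diagonal_mul_diagonal, Matrix.diagonal_mul_diagonal]
    refine congrArg Matrix.diagonal (funext fun i => ?_)
    by_cases h : σ i = 0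
    · simp [h]
    · simp only [if_neg h]; field_simp
  have hDpDDDp : Dp * (D * D) * Dp = E := by
    rw [hDpDD, hDdef, hDpdef, hEdef, Matrix.diagonal_mul_diagonal]
    refine congrArg Matrix.diagonal (funext fun i => ?_)
    by_cases h : σ i = 0
    · simp [h]
    · simp only [if_neg h]; field_simp
  have hDpE : Dp * E = Dp := by
    rw [hDpdef, hEdef, Matrix.diagonal_mul_diagonal]
    refine congrArg Matrix.diagonal (funext fun i => ?_)
    by_cases h : σ i = 0
    · simp [h]
    · simp [h]
  set U : Matrix m n ℝ := C * Dp with hUdef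
  have hUtC : Uᵀ * C = D := by
    rw [hUdef, Matrix.transpose_mul, hDpt, Matrix.mul_assoc, hCC, hDpDD]
  have hUtU : Uᵀ * U = E := by
    rw [hUdef, Matrix.transpose_mul, hDpt, Matrix.mul_assoc, ← Matrix.mul_assoc Cᵀ, hCC,
      ← Matrix.mul_assoc, ← Matrix.mul_assoc, Matrix.mul_assoc Dp, hDpDDDp]
  have hUE : U * E = U := by
    rw [hUdef, Matrix.mul_assoc, hDpE]
  set P : Matrix m m ℝ := U * Uᵀ with hPdef
  have hPt : Pᵀ = P := by rw [hPdef, Matrix.transpose_mul, Matrix.transpose_transpose]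
  have hPP : P * P = P := by
    rw [hPdef, Matrix.mul_assoc, ← Matrix.mul_assoc Uᵀ, hUtU, ← Matrix.mul_assoc, hUE]
  set W : Matrix m m ℝ := 1 - P with hWdef
  have hWt : Wᵀ = W := by rw [hWdef, Matrix.transpose_sub, Matrix.transpose_one, hPt]
  have hWW : Wᵀ * W = W := by
    rw [hWt, hWdef]
    simp only [sub_mul, mul_sub, one_mul, mul_one, hPP]
    simp only [sub_self, sub_zero]
  have hWpsd : W.PosSemidef := by
    have := Matrix.posSemidef_conjTranspose_mul_self W
    rwa [conjTranspose_eq_transpose_of_trivial, hWW] at this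
  -- trace of Λ11 * W is nonnegative
  have hTrW : 0 ≤ (Λ11 * W).trace := by
    have hTT : hWpsd.sqrt * hWpsd.sqrt = W := hWpsd.sqrt_mul_self
    set T : Matrix m m ℝ := hWpsd.sqrt with hTdef
    have hTt : Tᵀ = T := herm_transpose hWpsd.posSemidef_sqrt.1
    have h1 : Λ11 * W = Aᵀ * (A * T) * T := by
      rw [← hA11, ← hTT]; simp only [Matrix.mul_assoc]
    have h2 : T * Aᵀ * (A * T) = (A * T)ᵀ * (A * T) := by
      rw [Matrix.transpose_mul, hTt]
    rw [h1, Matrix.trace_mul_cycle, h2]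
    exact frob_nonneg _
  -- the two Frobenius norms
  have hAU : (A * U)ᵀ * (A * U) = Uᵀ * (Λ11 * U) := by
    rw [Matrix.transpose_mul, ← hA11]; simp only [Matrix.mul_assoc]
  have hBV : (B * V)ᵀ * (B * V) = Vᵀ * (Λ22 * V) := by
    rw [Matrix.transpose_mul, ← hB22]; simp only [Matrix.mul_assoc]
  have ht2 : ((B * V)ᵀ * (B * V)).trace = Λ22.trace := by
    rw [hBV, Matrix.trace_mul_comm, Matrix.mul_assoc, hV2, mul_one]
  have ht1 : ((A * U)ᵀ * (A * U)).trace ≤ Λ11.trace := by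
    rw [hAU, Matrix.trace_mul_comm, Matrix.mul_assoc, ← hPdef]
    have hsplit : (Λ11 * W).trace = Λ11.trace - (Λ11 * P).trace := by
      rw [hWdef, mul_sub, mul_one, Matrix.trace_sub]
    linarith [hTrW, hsplit]
  -- the trace of S as a Frobenius inner product
  have htrS : S.trace = ((A * U)ᵀ * (B * V)).trace := by
    have h1 : S.trace = D.trace := by
      rw [hSpec, Matrix.trace_mul_comm, ← Matrix.mul_assoc, hV1, one_mul]
    have h2 : (A * U)ᵀ * (B * V) = Uᵀ * C := by
      rw [Matrix.transpose_mul, hCdef, ← hA12]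
      simp only [Matrix.mul_assoc]
    rw [h1, ← hUtC, h2]
  -- final assembly
  rw [htn12, htrS, traceNorm_of_posSemidef hP11, traceNorm_of_posSemidef hP22]
  calc ((A * U)ᵀ * (B * V)).trace ^ 2
      ≤ ((A * U)ᵀ * (A * U)).trace * ((B * V)ᵀ * (B * V)).trace := frob_cs _ _
    _ ≤ Λ11.trace * ((B * V)ᵀ * (B * V)).trace :=
        mul_le_mul_of_nonneg_right ht1 (frob_nonneg _)
    _ = Λ11.trace * Λ22.trace := by rw [ht2]
end

section
/- If Λ = [[A, C],[Cᵀ, B]] is a positive semidefinite real symmetric block matrix, then Tr(Cᵀ A⁺ C) ≤ Tr(B), where A⁺ is the Moore–Penrose pseudoinverse of A. -/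
open Matrix BigOperators

/-- The four Penrose conditions characterizing the Moore–Penrose pseudoinverse
of a real square matrix. -/
def IsMoorePenrose {n : Type*} [Fintype n] (A P : Matrix n n ℝ) : Prop :=
  A * P * A = A ∧ P * A * P = P ∧ (A * P)ᵀ = A * P ∧ (P * A)ᵀ = P * A

private lemma lin_zero {a b : ℝ} (h : ∀ t : ℝ, 0 ≤ t * a + b) : a = 0 := by
  by_contra ha
  have h1 := h ((-b - 1) / a)
  rw [div_mul_cancel₀ _ ha] at h1
  linarith

private lemma dp_aux {a b : Type*} [Fintype a] [Fintype b] (N : Matrix a b ℝ)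
    (v : b → ℝ) (w : a → ℝ) : (N *ᵥ v) ⬝ᵥ w = v ⬝ᵥ (Nᵀ *ᵥ w) := by
  rw [dotProduct_mulVec, vecMul_transpose]

private lemma entry_aux {a b : Type*} [Fintype a] [Fintype b] [DecidableEq a] [DecidableEq b]
    (N : Matrix a b ℝ) (i : a) (j : b) :
    (Pi.single i 1 : a → ℝ) ⬝ᵥ (N *ᵥ Pi.single j 1) = N i j := by
  simp [mulVec_single, dotProduct_single]

theorem trace_schur_le_trace_block {m n : Type*} [Fintype m] [Fintype n]
    [DecidableEq m] [DecidableEq n]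
    (A : Matrix m m ℝ) (B : Matrix n n ℝ) (C : Matrix m n ℝ)
    (hA : A.IsSymm) (hApsd : A.PosSemidef) (hB : B.IsSymm)
    (P : Matrix m m ℝ) (hP : IsMoorePenrose A P)
    (hΛ : (Matrix.fromBlocks A C Cᵀ B).PosSemidef) :
    (Cᵀ * P * C).trace ≤ B.trace := by
  obtain ⟨hAPA, hPAP, hAPt, hPAt⟩ := hP
  have hQ : ∀ (u : m → ℝ) (v : n → ℝ),
      0 ≤ u ⬝ᵥ (A *ᵥ u) + u ⬝ᵥ (C *ᵥ v) + v ⬝ᵥ (Cᵀ *ᵥ u) + v ⬝ᵥ (B *ᵥ v) := by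
    intro u v
    have h := hΛ.dotProduct_mulVec_nonneg (Sum.elim u v)
    simpa [fromBlocks_mulVec, sumElim_dotProduct_sumElim, dotProduct_add,
      add_assoc] using h
  set M : Matrix m m ℝ := 1 - A * P with hM
  have hMt : Mᵀ = M := by
    rw [hM, transpose_sub, transpose_one, hAPt]
  have hMA : M * A = 0 := by
    rw [hM, sub_mul, one_mul, hAPA, sub_self]
  -- step 1 : M * C = 0
  have hMC : M * C = 0 := by
    ext i j
    have key : ∀ t : ℝ, 0 ≤ t * (2 * ((M * C) i j)) +
        (Pi.single j 1 : n → ℝ) ⬝ᵥ (B *ᵥ Pi.single j 1) := by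
      intro t
      have h := hQ (t • (M *ᵥ Pi.single i 1)) (Pi.single j 1)
      have e1 : (t • (M *ᵥ Pi.single i 1)) ⬝ᵥ (A *ᵥ (t • (M *ᵥ Pi.single i 1))) = 0 := by
        rw [mulVec_smul, smul_dotProduct, dotProduct_smul, dp_aux, hMt,
          mulVec_mulVec, hMA]
        simp
      have e2 : (t • (M *ᵥ Pi.single i 1)) ⬝ᵥ (C *ᵥ Pi.single j 1) = t * ((M * C) i j) := by
        rw [smul_dotProduct, dp_aux, hMt, mulVec_mulVec]
        simp [mulVec_single, dotProduct_single]
      have e3 : (Pi.single j 1 : n → ℝ) ⬝ᵥ (Cᵀ *ᵥ (t • (M *ᵥ Pi.single i 1))) = t * ((M * C) i j) := by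
        rw [dotProduct_comm, dp_aux, transpose_transpose]
        exact e2
      rw [e1, e2, e3] at h
      linarith
    have h2 := lin_zero key
    have : (M * C) i j = 0 := by linarith
    simpa using this
  have hAPC : A * P * C = C := by
    rw [hM] at hMC
    rw [Matrix.sub_mul, Matrix.one_mul, sub_eq_zero] at hMC
    exact hMC.symm
  have hmat1 : (P * C)ᵀ * (A * (P * C)) = Cᵀ * Pᵀ * C := by
    rw [transpose_mul, ← Matrix.mul_assoc A, hAPC, Matrix.mul_assoc]
  have hmat2 : (P * C)ᵀ * C = Cᵀ * Pᵀ * C := by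
    rw [transpose_mul]
  -- step 2 : diagonal entries of B - Cᵀ P C are nonneg
  have hdiag : ∀ j : n, (Cᵀ * P * C) j j ≤ B j j := by
    intro j
    have h := hQ (-(P *ᵥ (C *ᵥ Pi.single j 1))) (Pi.single j 1)
    have e1 : (-(P *ᵥ (C *ᵥ Pi.single j 1))) ⬝ᵥ (A *ᵥ (-(P *ᵥ (C *ᵥ Pi.single j 1)))) =
        (Cᵀ * Pᵀ * C) j j := by
      simp only [neg_dotProduct, mulVec_neg, dotProduct_neg, neg_neg, mulVec_mulVec]
      rw [dp_aux]
      simp only [mulVec_mulVec]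
      rw [hmat1, entry_aux]
    have e2 : (-(P *ᵥ (C *ᵥ Pi.single j 1))) ⬝ᵥ (C *ᵥ Pi.single j 1) =
        -((Cᵀ * Pᵀ * C) j j) := by
      simp only [neg_dotProduct, mulVec_mulVec, neg_inj]
      rw [dp_aux]
      simp only [mulVec_mulVec]
      rw [hmat2, entry_aux]
    have e3 : (Pi.single j 1 : n → ℝ) ⬝ᵥ (Cᵀ *ᵥ (-(P *ᵥ (C *ᵥ Pi.single j 1)))) =
        -((Cᵀ * P * C) j j) := by
      simp only [mulVec_neg, dotProduct_neg, mulVec_mulVec, neg_inj]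
      rw [← Matrix.mul_assoc, entry_aux]
    have e4 : (Pi.single j 1 : n → ℝ) ⬝ᵥ (B *ᵥ Pi.single j 1) = B j j := entry_aux B j j
    rw [e1, e2, e3, e4] at h
    linarith
  rw [trace, trace]
  exact Finset.sum_le_sum fun j _ => hdiag j
end

section
/- For any quantum state ρ on a d-dimensional Hilbert space and LOOs {A_k}_{k=1}^{d²}, the sum of variances satisfies Σ_{k=1}^{d²} [Tr(ρ A_k²) − (Tr(ρ A_k))²] = d − Tr(ρ²), and in particular this sum is at least d − 1. -/
open Matrix BigOperators Finset ComplexOrder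

section Aux

variable {d : ℕ}

private lemma trace_std_mul (M : Matrix (Fin d) (Fin d) ℂ) (i j : Fin d) :
    (Matrix.single i j 1 * M).trace = M j i := by
  simp [Matrix.trace, Matrix.mul_apply, Matrix.single, Matrix.diag, ite_and]

private lemma key_herm (A : Fin (d ^ 2) → Matrix (Fin d) (Fin d) ℂ)
    (horth : ∀ k l, (A k * A l).trace = if k = l then 1 else 0)
    (hspan : ∀ M : Matrix (Fin d) (Fin d) ℂ, M.IsHermitian →
      M ∈ Submodule.span ℝ (Set.range A))
    (M : Matrix (Fin d) (Fin d) ℂ) (hM : M.IsHermitian)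
    (N : Matrix (Fin d) (Fin d) ℂ) :
    ∑ k, (M * A k).trace * (A k * N).trace = (M * N).trace := by
  obtain ⟨c, hc⟩ := (Submodule.mem_span_range_iff_exists_fun ℝ).mp (hspan M hM)
  have hMc : ∀ j, (M * A j).trace = (c j : ℂ) := by
    intro j
    rw [← hc, Finset.sum_mul, Matrix.trace_sum]
    simp only [Matrix.smul_mul, Matrix.trace_smul, horth]
    simp [smul_ite, Complex.real_smul]
  have hMN : (M * N).trace = ∑ k, (c k : ℂ) * (A k * N).trace := by
    rw [← hc, Finset.sum_mul, Matrix.trace_sum]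
    simp only [Matrix.smul_mul, Matrix.trace_smul, Complex.real_smul]
  rw [hMN]
  exact Finset.sum_congr rfl fun k _ => by rw [hMc k]

private lemma key_all (A : Fin (d ^ 2) → Matrix (Fin d) (Fin d) ℂ)
    (horth : ∀ k l, (A k * A l).trace = if k = l then 1 else 0)
    (hspan : ∀ M : Matrix (Fin d) (Fin d) ℂ, M.IsHermitian →
      M ∈ Submodule.span ℝ (Set.range A))
    (M N : Matrix (Fin d) (Fin d) ℂ) :
    ∑ k, (M * A k).trace * (A k * N).trace = (M * N).trace := by
  set H : Matrix (Fin d) (Fin d) ℂ := (1/2 : ℂ) • (M + Mᴴ) with hH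
  set K : Matrix (Fin d) (Fin d) ℂ := (-(Complex.I)/2 : ℂ) • (M - Mᴴ) with hK
  have hHh : H.IsHermitian := by
    rw [Matrix.IsHermitian, hH, conjTranspose_smul]
    simp [add_comm]
  have hKh : K.IsHermitian := by
    rw [Matrix.IsHermitian, hK, conjTranspose_smul, conjTranspose_sub,
      conjTranspose_conjTranspose, ← neg_sub M Mᴴ, smul_neg, ← neg_smul]
    congr 1
    norm_num [Complex.ext_iff]
  have hMHK : M = H + Complex.I • K := by
    ext i j
    simp only [hH, hK, Matrix.add_apply, Matrix.smul_apply, Matrix.sub_apply,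
      smul_eq_mul]
    ring_nf
    simp [Complex.I_sq]
    ring
  have e1 := key_herm A horth hspan H hHh N
  have e2 := key_herm A horth hspan K hKh N
  calc ∑ k, (M * A k).trace * (A k * N).trace
      = ∑ k, ((H * A k).trace * (A k * N).trace
          + Complex.I * ((K * A k).trace * (A k * N).trace)) := by
        refine Finset.sum_congr rfl fun k _ => ?_
        conv_lhs => rw [hMHK]
        simp only [Matrix.add_mul, Matrix.smul_mul, trace_add, trace_smul, smul_eq_mul]
        ring
    _ = (H * N).trace + Complex.I * (K * N).trace := by
        rw [Finset.sum_add_distrib, ← Finset.mul_sum, e1, e2]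
    _ = (M * N).trace := by
        conv_rhs => rw [hMHK]
        simp only [Matrix.add_mul, Matrix.smul_mul, trace_add, trace_smul, smul_eq_mul]

private lemma sum_sq_eq (A : Fin (d ^ 2) → Matrix (Fin d) (Fin d) ℂ)
    (horth : ∀ k l, (A k * A l).trace = if k = l then 1 else 0)
    (hspan : ∀ M : Matrix (Fin d) (Fin d) ℂ, M.IsHermitian →
      M ∈ Submodule.span ℝ (Set.range A)) :
    ∑ k, A k * A k = (d : ℂ) • (1 : Matrix (Fin d) (Fin d) ℂ) := by
  ext i m
  rw [Matrix.sum_apply]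
  calc ∑ k, (A k * A k) i m
      = ∑ j, ∑ k, (A k i j) * (A k j m) := by
        rw [Finset.sum_comm]
        exact Finset.sum_congr rfl fun k _ => Matrix.mul_apply
    _ = ∑ j : Fin d, ((Matrix.single j i (1:ℂ)) * (Matrix.single m j (1:ℂ))).trace := by
        refine Finset.sum_congr rfl fun j _ => ?_
        rw [← key_all A horth hspan]
        refine Finset.sum_congr rfl fun k _ => ?_
        rw [trace_std_mul (A k) j i, Matrix.trace_mul_comm (A k) (Matrix.single m j 1),
          trace_std_mul (A k) m j]
    _ = ∑ j : Fin d, (if i = m then 1 else 0 : ℂ) := by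
        refine Finset.sum_congr rfl fun j _ => ?_
        by_cases h : i = m
        · subst h
          rw [Matrix.single_mul_single_same, if_pos rfl, one_mul, Matrix.trace_single_eq_same]
        · rw [Matrix.single_mul_single_of_ne (i := j) (j := i) (k := m) (h := h) (d := (1:ℂ)), if_neg h]
          simp
    _ = ((d : ℂ) • (1 : Matrix (Fin d) (Fin d) ℂ)) i m := by
        simp [Matrix.one_apply, Matrix.smul_apply]

private lemma trace_real (M N : Matrix (Fin d) (Fin d) ℂ)
    (hM : M.IsHermitian) (hN : N.IsHermitian) : ((M * N).trace.im = 0) := by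
  have h : star (M * N).trace = (M * N).trace := by
    calc star (M * N).trace = ((M * N)ᴴ).trace := (Matrix.trace_conjTranspose _).symm
      _ = (Nᴴ * Mᴴ).trace := by rw [conjTranspose_mul]
      _ = (N * M).trace := by rw [hN.eq, hM.eq]
      _ = (M * N).trace := Matrix.trace_mul_comm _ _
  have h2 : -((M * N).trace.im) = (M * N).trace.im := by
    simpa using congrArg Complex.im h
  linarith

private lemma purity_le_one {ρ : Matrix (Fin d) (Fin d) ℂ} (hρ : ρ.PosSemidef)
    (hρ1 : ρ.trace = 1) : (ρ * ρ).trace.re ≤ 1 := by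
  have hH := hρ.1
  set U : Matrix (Fin d) (Fin d) ℂ := (hH.eigenvectorUnitary : Matrix (Fin d) (Fin d) ℂ)
    with hU
  set D : Matrix (Fin d) (Fin d) ℂ := diagonal (RCLike.ofReal ∘ hH.eigenvalues) with hD
  have hspec : ρ = U * D * star U := hH.spectral_theorem
  have hUU : star U * U = 1 := mem_unitaryGroup_iff'.mp hH.eigenvectorUnitary.2
  have htr1 : ρ.trace = D.trace := by
    rw [hspec, Matrix.trace_mul_cycle, hUU, Matrix.one_mul]
  have htr2 : (ρ * ρ).trace = (D * D).trace := by
    rw [hspec]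
    have h3 : U * D * star U * (U * D * star U) = U * (D * (star U * U) * D) * star U := by
      noncomm_ring
    rw [h3, hUU, Matrix.mul_one, Matrix.trace_mul_cycle, hUU, Matrix.one_mul]
  have hsum1 : ∑ i, hH.eigenvalues i = 1 := by
    have h4 : ((∑ i, hH.eigenvalues i : ℝ) : ℂ) = 1 := by
      rw [← hρ1, htr1, hD]
      simp [Matrix.trace_diagonal]
    exact_mod_cast h4
  have hD2 : (D * D).trace = ((∑ i, (hH.eigenvalues i) ^ 2 : ℝ) : ℂ) := by
    rw [hD]
    simp [Matrix.diagonal_mul_diagonal, Matrix.trace_diagonal, sq]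
  have hle : ∑ i, (hH.eigenvalues i) ^ 2 ≤ 1 := by
    calc ∑ i, (hH.eigenvalues i) ^ 2 ≤ (∑ i, hH.eigenvalues i) ^ 2 :=
          Finset.sum_sq_le_sq_sum_of_nonneg fun i _ => hρ.eigenvalues_nonneg i
      _ = 1 := by rw [hsum1]; norm_num
  rw [htr2, hD2, Complex.ofReal_re]
  exact hle

end Aux

theorem sum_variances_LOOs_eq (d : ℕ) (hd : 0 < d)
    (ρ : Matrix (Fin d) (Fin d) ℂ) (hρ : ρ.PosSemidef) (hρ1 : ρ.trace = 1)
    (A : Fin (d ^ 2) → Matrix (Fin d) (Fin d) ℂ)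
    (hherm : ∀ k, (A k).IsHermitian)
    (horth : ∀ k l, (A k * A l).trace = if k = l then 1 else 0)
    (hspan : ∀ M : Matrix (Fin d) (Fin d) ℂ, M.IsHermitian →
      M ∈ Submodule.span ℝ (Set.range A)) :
    (∑ k, ((ρ * (A k * A k)).trace.re - ((ρ * A k).trace.re) ^ 2)
        = (d : ℝ) - (ρ * ρ).trace.re) ∧
      ((d : ℝ) - 1 ≤ ∑ k, ((ρ * (A k * A k)).trace.re - ((ρ * A k).trace.re) ^ 2)) := by
  have hρh := hρ.1
  have h1 : ∑ k, (ρ * (A k * A k)).trace.re = (d : ℝ) := by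
    have h1c : ∑ k, (ρ * (A k * A k)).trace = (d : ℂ) := by
      calc ∑ k, (ρ * (A k * A k)).trace = (ρ * ∑ k, (A k * A k)).trace := by
            rw [Matrix.mul_sum, Matrix.trace_sum]
        _ = (d : ℂ) := by
            rw [sum_sq_eq A horth hspan, Matrix.mul_smul, Matrix.mul_one,
              Matrix.trace_smul, hρ1, smul_eq_mul, mul_one]
    have h1r := congrArg Complex.re h1c
    rw [Complex.re_sum] at h1r
    simpa using h1r
  have hreal : ∀ k, ((ρ * A k).trace.im = 0) := fun k => trace_real ρ (A k) hρh (hherm k)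
  have h2 : ∑ k, ((ρ * A k).trace.re) ^ 2 = (ρ * ρ).trace.re := by
    have hc : ∑ k, (ρ * A k).trace * (A k * ρ).trace = (ρ * ρ).trace :=
      key_all A horth hspan ρ ρ
    have hrw : ∀ k, (ρ * A k).trace * (A k * ρ).trace
        = ((((ρ * A k).trace.re) ^ 2 : ℝ) : ℂ) := by
      intro k
      set t := (ρ * A k).trace.re with ht
      have htr : (ρ * A k).trace = (t : ℂ) := by
        rw [Complex.ext_iff]
        constructor
        · simp [ht]
        · simp [hreal k]
      rw [Matrix.trace_mul_comm (A k) ρ, htr]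
      push_cast
      ring
    rw [Finset.sum_congr rfl (fun k _ => hrw k), ← Complex.ofReal_sum] at hc
    have h2r := congrArg Complex.re hc
    rw [Complex.ofReal_re] at h2r
    exact h2r
  have hsplit : ∑ k, ((ρ * (A k * A k)).trace.re - ((ρ * A k).trace.re) ^ 2)
      = (d : ℝ) - (ρ * ρ).trace.re := by
    rw [Finset.sum_sub_distrib, h1, h2]
  refine ⟨hsplit, ?_⟩
  rw [hsplit]
  have := purity_le_one hρ hρ1
  linarith
end

section
/- For the operators X^(N) = (a^N + a†^N)/√2 and P^(N) = −i(a^N − a†^N)/√2 on the bosonic Fock space, the commutator satisfies [X^(N), P^(N)] = i Σ_{r=1}^{N} r!·(N choose r)² a†^{N−r} a^{N−r}; in particular the vacuum expectation of (1/i)[X^(N), P^(N)] equals N!, so δ²(X^(N)) + δ²(P^(N)) ≥ N! for all states. -/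
open BigOperators Finset

section
variable {R : Type*} [Ring R] (a b : R) (hcomm : a * b = b * a + 1)

include hcomm in
lemma aux1 : ∀ j : ℕ, a * b ^ j = b ^ j * a + j • b ^ (j - 1) := by
  intro j
  induction j with
  | zero => simp
  | succ n ih =>
    rw [pow_succ, ← mul_assoc, ih, add_mul, mul_assoc, hcomm]
    rcases Nat.eq_zero_or_pos n with h | h
    · subst h; simp [mul_add]
    · have h1 : n - 1 + 1 = n := by omega
      rw [smul_mul_assoc, ← pow_succ, h1, mul_add, mul_one, ← pow_succ]
      rw [← mul_assoc, ← pow_succ]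
      simp only [Nat.add_sub_cancel, succ_nsmul]
      abel

include hcomm in
lemma aux2 : ∀ m n : ℕ, a ^ m * b ^ n =
    ∑ k ∈ range (m + 1), (k.factorial * m.choose k * n.choose k) •
      (b ^ (n - k) * a ^ (m - k)) := by
  intro m
  induction m with
  | zero => intro n; simp
  | succ m ih =>
    intro n
    have key : ∀ k, k.factorial * (k+1) * ((m+1).choose (k+1) * n.choose (k+1))
        = k.factorial * m.choose (k+1) * n.choose (k+1) * (k+1)
          + k.factorial * m.choose k * n.choose k * (n - k) := by
      intro k
      have h1 : n.choose (k+1) * (k+1) = n.choose k * (n - k) := Nat.choose_succ_right_eq n k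
      have h2 : (m+1).choose (k+1) = m.choose k + m.choose (k+1) := Nat.choose_succ_succ m k
      have h1' : k.factorial * m.choose k * n.choose k * (n - k)
          = k.factorial * m.choose k * (n.choose (k+1) * (k+1)) := by rw [mul_assoc, ← h1]
      rw [h2, h1']; ring
    have expand : a ^ (m+1) * b ^ n = ∑ k ∈ range (m+1),
        ((k.factorial * m.choose k * n.choose k) • (b ^ (n-k) * a ^ (m+1-k))
          + (k.factorial * m.choose k * n.choose k * (n-k)) • (b ^ (n-k-1) * a ^ (m-k))) := by
      rw [pow_succ', mul_assoc, ih n, Finset.mul_sum]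
      refine Finset.sum_congr rfl fun k hk => ?_
      have hk' : k ≤ m := Nat.lt_succ_iff.mp (mem_range.mp hk)
      have hmk : m - k + 1 = m + 1 - k := by omega
      have hc : k.factorial * m.choose k * n.choose k * (n-k)
          = k.factorial * (m.choose k * n.choose k) * (n-k) := by ring
      rw [mul_smul_comm, ← mul_assoc, aux1 a b hcomm (n-k), add_mul, smul_mul_assoc,
        mul_assoc (b ^ (n-k)) a (a ^ (m-k)), ← pow_succ', hmk, smul_add, smul_smul, hc,
        mul_assoc (k.factorial)]
    rw [expand, Finset.sum_add_distrib]
    have hsum : (∑ k ∈ range (m+1), ((k+1).factorial * m.choose (k+1) * n.choose (k+1)) •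
          (b ^ (n-(k+1)) * a ^ (m+1-(k+1))))
        = ∑ k ∈ range m, ((k+1).factorial * m.choose (k+1) * n.choose (k+1)) •
          (b ^ (n-(k+1)) * a ^ (m+1-(k+1))) := by
      rw [Finset.sum_range_succ]; simp [Nat.choose_succ_self]
    rw [Finset.sum_range_succ' (fun k => (k.factorial * m.choose k * n.choose k) •
        (b ^ (n-k) * a ^ (m+1-k))) m, ← hsum,
      Finset.sum_range_succ' (fun k => (k.factorial * (m+1).choose k * n.choose k) •
        (b ^ (n-k) * a ^ (m+1-k))) (m+1)]
    rw [add_right_comm, ← Finset.sum_add_distrib]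
    congr 1
    · refine Finset.sum_congr rfl fun k hk => ?_
      have e1 : n - (k+1) = n - k - 1 := by omega
      have e2 : m + 1 - (k+1) = m - k := by omega
      rw [e1, e2, ← add_smul]
      congr 1
      have h := key k
      simp only [Nat.factorial_succ]
      ring_nf
      ring_nf at h
      linarith
    · simp

include hcomm in
lemma aux3 (N : ℕ) : a ^ N * b ^ N = b ^ N * a ^ N +
    ∑ r ∈ Icc 1 N, (r.factorial * (N.choose r) ^ 2) • (b ^ (N - r) * a ^ (N - r)) := by
  rw [aux2 a b hcomm N N]
  have h : range (N + 1) = insert 0 (Icc 1 N) := by ext x; simp; omega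
  rw [h, Finset.sum_insert (by simp)]
  simp [sq, mul_assoc]

end

theorem higher_order_quadrature_commutator (R : Type*) [Ring R] [Algebra ℂ R]
    [StarRing R] [StarModule ℂ R]
    (a : R) (hcomm : a * star a = star a * a + 1) (N : ℕ) (hN : 1 ≤ N) :
    (let X : R := ((Real.sqrt 2 : ℂ))⁻¹ • (a ^ N + (star a) ^ N)
     let P : R := (-Complex.I * ((Real.sqrt 2 : ℂ))⁻¹) • (a ^ N - (star a) ^ N)
     -- the commutator identity
     (X * P - P * X =
        Complex.I • ∑ r ∈ Finset.Icc 1 N,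
          ((r.factorial * (N.choose r) ^ 2 : ℕ) : ℂ) • ((star a) ^ (N - r) * a ^ (N - r))) ∧
     -- vacuum expectation of (1/i)[X,P] equals N!
     (∀ φ₀ : R →ₗ[ℂ] ℂ, φ₀ 1 = 1 → (∀ y : R, φ₀ (y * a) = 0) →
        φ₀ (X * P - P * X) = Complex.I * (N.factorial : ℂ)) ∧
     -- the variance bound for all states
     (∀ φ : R →ₗ[ℂ] ℂ, φ 1 = 1 →
        (∀ x : R, 0 ≤ (φ (star x * x)).re ∧ (φ (star x * x)).im = 0) →
        (∀ x : R, φ (star x) = starRingEnd ℂ (φ x)) →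
        (N.factorial : ℝ) ≤
          ((φ (X * X)).re - ((φ X).re) ^ 2) + ((φ (P * P)).re - ((φ P).re) ^ 2))) := by
  intro X P
  have hXdef : X = ((Real.sqrt 2 : ℂ))⁻¹ • (a ^ N + (star a) ^ N) := rfl
  have hPdef : P = (-Complex.I * ((Real.sqrt 2 : ℂ))⁻¹) • (a ^ N - (star a) ^ N) := rfl
  clear_value X P
  set b : R := star a with hb
  set c : ℂ := ((Real.sqrt 2 : ℂ))⁻¹ with hcdef
  set A : R := a ^ N with hA
  set B : R := b ^ N with hB
  have hS := aux3 a b hcomm N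
  have hsub : A * B - B * A =
      ∑ r ∈ Icc 1 N, (r.factorial * (N.choose r) ^ 2) • (b ^ (N - r) * a ^ (N - r)) := by
    rw [hA, hB, hS, add_sub_cancel_left]
  have hc2 : c * c = (2 : ℂ)⁻¹ := by
    rw [hcdef, ← mul_inv, ← Complex.ofReal_mul, Real.mul_self_sqrt (by norm_num)]
    norm_num
  have h1 : X * P - P * X = Complex.I • (A * B - B * A) := by
    rw [hXdef, hPdef, smul_mul_assoc, mul_smul_comm, smul_mul_assoc, mul_smul_comm, smul_smul, smul_smul]
    have hsc : -Complex.I * c * c = c * (-Complex.I * c) := by ring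
    rw [hsc, ← smul_sub]
    have hx : (A + B) * (A - B) - (A - B) * (A + B) = (B * A - A * B) + (B * A - A * B) := by
      noncomm_ring
    rw [hx, smul_add, ← add_smul]
    have hss : c * (-Complex.I * c) + c * (-Complex.I * c) = -Complex.I := by
      have : c * (-Complex.I * c) = -Complex.I * (c * c) := by ring
      rw [this, hc2]; ring
    rw [hss, neg_smul, ← smul_neg, neg_sub]
  have hpart1 : X * P - P * X =
      Complex.I • ∑ r ∈ Finset.Icc 1 N,
        ((r.factorial * (N.choose r) ^ 2 : ℕ) : ℂ) • (b ^ (N - r) * a ^ (N - r)) := by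
    rw [h1, hsub]
    congr 1
    refine Finset.sum_congr rfl fun r hr => ?_
    rw [Nat.cast_smul_eq_nsmul]
  refine ⟨hpart1, ?_, ?_⟩
  · intro φ₀ hφ1 hφa
    rw [hpart1, map_smul, map_sum, smul_eq_mul]
    congr 1
    rw [Finset.sum_eq_single N]
    · simp [map_smul, hφ1, smul_eq_mul]
    · intro r hr hrN
      have hr' : 1 ≤ r ∧ r ≤ N := by simpa using hr
      have hd : N - r - 1 + 1 = N - r := by omega
      have ht : b ^ (N - r) * a ^ (N - r) = (b ^ (N - r) * a ^ (N - r - 1)) * a := by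
        rw [mul_assoc, ← pow_succ, hd]
      rw [map_smul, ht, hφa, smul_zero]
    · intro hNmem
      exact absurd (Finset.mem_Icc.mpr ⟨hN, le_refl N⟩) hNmem
  · intro φ hφ1 hpos hstar
    set α : ℝ := (φ X).re with hα
    set β : ℝ := (φ P).re with hβ
    set Y : R := X - (α : ℂ) • 1 with hY
    set Z : R := P - (β : ℂ) • 1 with hZ
    set x : R := Y + Complex.I • Z with hx
    have hcc : (starRingEnd ℂ) c = c := by
      rw [hcdef, map_inv₀, Complex.conj_ofReal]
    have hXs : star X = X := by
      rw [hXdef, hA, hB, hb, star_smul, star_add, star_pow, star_pow, star_star,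
        Complex.star_def, hcc]
      module
    have hPs : star P = P := by
      rw [hPdef, hA, hB, hb, star_smul, star_sub, star_pow, star_pow, star_star,
        Complex.star_def, map_mul, map_neg, Complex.conj_I, hcc]
      module
    have hYs : star Y = Y := by
      rw [hY, star_sub, hXs, star_smul, star_one, Complex.star_def, Complex.conj_ofReal]
    have hZs : star Z = Z := by
      rw [hZ, star_sub, hPs, star_smul, star_one, Complex.star_def, Complex.conj_ofReal]
    have hxs : star x = Y - Complex.I • Z := by
      rw [hx, star_add, star_smul, hYs, hZs, Complex.star_def, Complex.conj_I, neg_smul,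
        ← sub_eq_add_neg]
    have hYZ : Y * Z - Z * Y = X * P - P * X := by
      simp only [hY, hZ, sub_mul, mul_sub, smul_mul_assoc, mul_smul_comm, mul_one, one_mul,
        smul_smul, smul_sub]
      module
    have hxx : star x * x = Y * Y + Z * Z + Complex.I • (X * P - P * X) := by
      rw [hxs, hx, ← hYZ]
      simp only [sub_mul, mul_add, add_mul, mul_sub, smul_mul_assoc, mul_smul_comm, smul_smul,
        Complex.I_mul_I, neg_one_smul, smul_sub]
      abel
    -- value of the commutator under φ
    set S : ℂ := ∑ r ∈ Finset.Icc 1 N,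
        ((r.factorial * (N.choose r) ^ 2 : ℕ) : ℂ) * φ (b ^ (N - r) * a ^ (N - r)) with hSdef
    have hφcomm : φ (X * P - P * X) = Complex.I * S := by
      rw [hpart1, map_smul, map_sum, smul_eq_mul, hSdef]
      congr 1
      refine Finset.sum_congr rfl fun r hr => ?_
      rw [map_smul, smul_eq_mul]
    have hSre : (N.factorial : ℝ) ≤ S.re := by
      rw [hSdef]
      rw [Complex.re_sum]
      have hterm : ∀ r ∈ Finset.Icc 1 N,
          (0:ℝ) ≤ (((r.factorial * (N.choose r) ^ 2 : ℕ) : ℂ) * φ (b ^ (N - r) * a ^ (N - r))).re := by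
        intro r hr
        have hp := (hpos (a ^ (N - r))).1
        rw [star_pow, ← hb] at hp
        have : (((r.factorial * (N.choose r) ^ 2 : ℕ) : ℂ) * φ (b ^ (N - r) * a ^ (N - r))).re
            = ((r.factorial * (N.choose r) ^ 2 : ℕ) : ℝ) * (φ (b ^ (N - r) * a ^ (N - r))).re := by
          rw [show (((r.factorial * (N.choose r) ^ 2 : ℕ)) : ℂ)
              = (((r.factorial * (N.choose r) ^ 2 : ℕ) : ℝ) : ℂ) by push_cast; ring,
            Complex.re_ofReal_mul]
        rw [this]
        positivity
      have hNterm : (((N.factorial * (N.choose N) ^ 2 : ℕ) : ℂ) * φ (b ^ (N - N) * a ^ (N - N))).re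
          = (N.factorial : ℝ) := by
        simp [hφ1]
      calc (N.factorial : ℝ)
          = (((N.factorial * (N.choose N) ^ 2 : ℕ) : ℂ) * φ (b ^ (N - N) * a ^ (N - N))).re :=
            hNterm.symm
        _ ≤ _ := Finset.single_le_sum hterm (Finset.mem_Icc.mpr ⟨hN, le_refl N⟩)
    -- variance expansions
    have hYY : (φ (Y * Y)).re = (φ (X * X)).re - α ^ 2 := by
      have hexp : Y * Y = X * X - (α : ℂ) • X - (α : ℂ) • X + ((α : ℂ) * (α : ℂ)) • 1 := by
        simp only [hY, sub_mul, mul_sub, smul_mul_assoc, mul_smul_comm, mul_one, one_mul,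
          smul_smul, smul_sub]
        module
      rw [hexp]
      simp only [map_add, map_sub, map_smul, hφ1, smul_eq_mul, mul_one, Complex.add_re,
        Complex.sub_re, Complex.mul_re, Complex.ofReal_re, Complex.ofReal_im, ← hα]
      ring
    have hZZ : (φ (Z * Z)).re = (φ (P * P)).re - β ^ 2 := by
      have hexp : Z * Z = P * P - (β : ℂ) • P - (β : ℂ) • P + ((β : ℂ) * (β : ℂ)) • 1 := by
        simp only [hZ, sub_mul, mul_sub, smul_mul_assoc, mul_smul_comm, mul_one, one_mul,
          smul_smul, smul_sub]
        module
      rw [hexp]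
      simp only [map_add, map_sub, map_smul, hφ1, smul_eq_mul, mul_one, Complex.add_re,
        Complex.sub_re, Complex.mul_re, Complex.ofReal_re, Complex.ofReal_im, ← hβ]
      ring
    have hposx := (hpos x).1
    have hval : (φ (star x * x)).re = (φ (Y * Y)).re + (φ (Z * Z)).re - S.re := by
      rw [hxx, map_add, map_add, map_smul, hφcomm, smul_eq_mul]
      have : Complex.I * (Complex.I * S) = -S := by
        rw [← mul_assoc, Complex.I_mul_I, neg_one_mul]
      rw [this]
      simp [Complex.add_re, Complex.neg_re]
      ring
    rw [hval] at hposx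
    have := hSre
    nlinarith [hposx, hSre, hYY, hZZ]
end
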